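/- Let S be a leaf SCC of a finite directed graph G, let i be any vertex of S, and let G' be the graph obtained from G by deleting all outgoing arcs of i. Then in G', every vertex of S has a directed path to i (so every vertex of S is grounded in G'), and G' has exactly one fewer leaf SCC than G. -/

import Mathlib

/-- A leaf vertex of a directed graph: a vertex with no outgoing arcs. -/
def IsLeafVertex {V : Type*} (A : V → V → Prop) (i : V) : Prop := ∀ j, ¬ A i j

/-- A strongly connected component: a nonempty set of vertices, any two of which are
mutually reachable, and which is maximal with this property. -/
def IsSCC {V : Type*} (A : V → V → Prop) (S : Set V) : Prop :=
  S.Nonempty ∧ (∀ i ∈ S, ∀ j ∈ S, Relation.ReflTransGen A i j) ∧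
    ∀ k, (∀ j ∈ S, Relation.ReflTransGen A k j ∧ Relation.ReflTransGen A j k) → k ∈ S

/-- A leaf SCC: a non-trivial SCC (at least two vertices) with no arc leaving it. -/
def IsLeafSCC {V : Type*} (A : V → V → Prop) (S : Set V) : Prop :=
  IsSCC A S ∧ (∃ i ∈ S, ∃ j ∈ S, i ≠ j) ∧ ∀ i ∈ S, ∀ j, A i j → j ∈ S

/-- Pruning a leaf SCC: let `S` be a leaf SCC of `G`, `i ∈ S`, and let `G'` be obtained
from `G` by deleting all outgoing arcs of `i`. Then in `G'` every vertex of `S` has a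
directed path to `i` (which is a leaf vertex of `G'`, so every vertex of `S` is grounded
in `G'`), and `G'` has exactly one fewer leaf SCC than `G`. -/
theorem prune_leaf_scc {V : Type*} [Fintype V] (A : V → V → Prop) (S : Set V)
    (hS : IsLeafSCC A S) (i : V) (hi : i ∈ S) :
    (∀ v ∈ S, Relation.ReflTransGen (fun j k => A j k ∧ j ≠ i) v i) ∧
    (∀ v ∈ S, ∃ l : V, IsLeafVertex (fun j k => A j k ∧ j ≠ i) l ∧
        Relation.ReflTransGen (fun j k => A j k ∧ j ≠ i) v l) ∧
    {T : Set V | IsLeafSCC (fun j k => A j k ∧ j ≠ i) T}.ncard + 1 =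
      {T : Set V | IsLeafSCC A T}.ncard := by
  obtain ⟨⟨hne, hconn, hmax⟩, hnt, hleaf⟩ := id hS
  set A' : V → V → Prop := fun j k => A j k ∧ j ≠ i with hA'
  -- Part 1
  have part1 : ∀ v ∈ S, Relation.ReflTransGen A' v i := by
    intro v hv
    have h : Relation.ReflTransGen A v i := hconn v hv i hi
    clear hv
    induction h using Relation.ReflTransGen.head_induction_on with
    | refl => exact .refl
    | @head x y hxy hyi ih =>
      rcases eq_or_ne x i with rfl | hx
      · exact .refl
      · exact Relation.ReflTransGen.head ⟨hxy, hx⟩ ih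
  refine ⟨part1, fun v hv => ⟨i, fun j h => h.2 rfl, part1 v hv⟩, ?_⟩
  -- helper: a path in A' starting at i is trivial
  have hi_stuck : ∀ j, Relation.ReflTransGen A' i j → j = i := by
    intro j h
    rcases h.cases_head with rfl | ⟨y, ⟨_, hne'⟩, _⟩
    · rfl
    · exact absurd rfl hne'
  have key : {T : Set V | IsLeafSCC A' T} = {T : Set V | IsLeafSCC A T} \ {S} := by
    ext T
    simp only [Set.mem_setOf_eq, Set.mem_diff, Set.mem_singleton_iff]
    constructor
    · rintro ⟨⟨hTne, hTconn, hTmax⟩, ⟨a, ha, b, hb, hab⟩, hTleaf⟩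
      -- i ∉ T
      have hiT : i ∉ T := by
        intro hiT
        rcases eq_or_ne a i with rfl | haI
        · exact hab (hi_stuck b (hTconn a hiT b hb)).symm
        · exact haI (hi_stuck a (hTconn i hiT a ha))
      -- A-arcs from T stay in T
      have hstep : ∀ j ∈ T, ∀ m, A j m → m ∈ T := by
        intro j hj m hjm
        exact hTleaf j hj m ⟨hjm, fun h => hiT (h ▸ hj)⟩
      have hclosed : ∀ j k, j ∈ T → Relation.ReflTransGen A j k → k ∈ T := by
        intro j k hj h
        induction h with
        | refl => exact hj
        | tail _ hbc ih => exact hstep _ ih _ hbc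
      refine ⟨⟨⟨hTne, fun p hp q hq => Relation.ReflTransGen.mono (r := A') (p := A) (fun _ _ h => h.1) _ _ (hTconn p hp q hq), ?_⟩,
          ⟨a, ha, b, hb, hab⟩, hstep⟩, ?_⟩
      · intro k hk
        obtain ⟨j, hj⟩ := hTne
        exact hclosed j k hj (hk j hj).2
      · rintro rfl; exact hiT hi
    · rintro ⟨⟨⟨hTne, hTconn, hTmax⟩, ⟨a, ha, b, hb, hab⟩, hTleaf⟩, hTS⟩
      -- T and S are disjoint
      have hdisj : ∀ x, x ∈ T → x ∉ S := by
        intro x hxT hxS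
        apply hTS
        have hST : S ⊆ T := by
          intro k hk
          refine hTmax k fun j hj => ?_
          exact ⟨(hconn k hk x hxS).trans (hTconn x hxT j hj),
            (hTconn j hj x hxT).trans (hconn x hxS k hk)⟩
        have hTSsub : T ⊆ S := by
          intro k hk
          refine hmax k fun j hj => ?_
          exact ⟨(hTconn k hk x hxT).trans (hconn x hxS j hj),
            (hconn j hj x hxS).trans (hTconn x hxT k hk)⟩
        exact Set.Subset.antisymm hTSsub hST
      have hiT : i ∉ T := fun h => hdisj i h hi
      have hstep' : ∀ j ∈ T, ∀ m, A' j m → m ∈ T := fun j hj m h => hTleaf j hj m h.1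
      -- A-paths within T become A'-paths
      have hconv : ∀ j k, Relation.ReflTransGen A j k → j ∈ T → Relation.ReflTransGen A' j k := by
        intro j k h
        induction h using Relation.ReflTransGen.head_induction_on with
        | refl => intro _; exact .refl
        | @head x y hxy hyk ih =>
          intro hx
          have hy : y ∈ T := hTleaf x hx y hxy
          exact Relation.ReflTransGen.head ⟨hxy, fun h => hiT (h ▸ hx)⟩ (ih hy)
      refine ⟨⟨hTne, fun p hp q hq => hconv p q (hTconn p hp q hq) hp, ?_⟩,
        ⟨a, ha, b, hb, hab⟩, hstep'⟩
      intro k hk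
      refine hTmax k fun j hj => ?_
      obtain ⟨h1, h2⟩ := hk j hj
      exact ⟨Relation.ReflTransGen.mono (r := A') (p := A) (fun _ _ h => h.1) _ _ h1, Relation.ReflTransGen.mono (r := A') (p := A) (fun _ _ h => h.1) _ _ h2⟩
  rw [key]
  exact Set.ncard_diff_singleton_add_one hS (Set.toFinite _)
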